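/- Let σ : ℂ[w] be the polynomial f(z₀, w) of degree n with n distinct roots w_1,...,w_n (i.e. ∂f/∂w(z₀, w_i) ≠ 0 for each i). Then there exist δ > 0 and holomorphic functions φ_1,...,φ_n on B(z₀, δ) with φ_i(z₀) = w_i, f(z, φ_i(z)) = 0, and for each z ∈ B(z₀, δ), the roots of f(z, ·) are exactly {φ_1(z),...,φ_n(z)}. -/

import Mathlib

noncomputable def eval2 (F : Polynomial (Polynomial ℂ)) (z w : ℂ) : ℂ :=
  (F.map (Polynomial.evalRingHom z)).eval w

open Polynomial Filter Metric Topology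

lemma eval2_eq_sum (F : Polynomial (Polynomial ℂ)) (z w : ℂ) :
    eval2 F z w = ∑ i ∈ Finset.range (F.natDegree + 1), (F.coeff i).eval z * w ^ i := by
  rw [eval2, Polynomial.eval_map, Polynomial.eval₂_eq_sum_range]
  rfl

lemma contDiff_evalP (p : Polynomial ℂ) : ContDiff ℂ ⊤ fun x : ℂ => p.eval x := by
  have h : (fun x : ℂ => p.eval x)
      = fun x => ∑ i ∈ Finset.range (p.natDegree + 1), p.coeff i * x ^ i := by
    funext x; exact eval_eq_sum_range x
  rw [h]
  exact ContDiff.sum fun i _ => contDiff_const.mul (contDiff_id.pow i)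

lemma contDiff_g (F : Polynomial (Polynomial ℂ)) :
    ContDiff ℂ ⊤ fun p : ℂ × ℂ => eval2 F p.1 p.2 := by
  have h : (fun p : ℂ × ℂ => eval2 F p.1 p.2)
      = fun p : ℂ × ℂ =>
        ∑ i ∈ Finset.range (F.natDegree + 1), (F.coeff i).eval p.1 * p.2 ^ i := by
    funext p; exact eval2_eq_sum F p.1 p.2
  rw [h]
  exact ContDiff.sum fun i _ =>
    ((contDiff_evalP _).comp contDiff_fst).mul (contDiff_snd.pow i)

lemma exists_sheet (F : Polynomial (Polynomial ℂ)) (z₀ wi : ℂ)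
    (h0 : eval2 F z₀ wi = 0)
    (hs : deriv (fun v => eval2 F z₀ v) wi ≠ 0) :
    ∃ φ : ℂ → ℂ, φ z₀ = wi ∧ (∀ᶠ z in 𝓝 z₀, eval2 F z (φ z) = 0) ∧
      ∃ u ∈ 𝓝 z₀, DifferentiableOn ℂ φ u := by
  set g : ℂ × ℂ → ℂ := fun p => eval2 F p.1 p.2 with hgdef
  have hg : ContDiff ℂ ⊤ g := contDiff_g F
  set a : ℂ × ℂ := (z₀, wi) with hadef
  have hgd : HasFDerivAt g (fderiv ℂ g a) a :=
    (hg.differentiable (by simp) a).hasFDerivAt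
  have hpart : HasDerivAt (fun v => eval2 F z₀ v) (fderiv ℂ g a (0, 1)) wi := by
    have h1 : HasDerivAt (fun v : ℂ => ((z₀ : ℂ), v)) ((0 : ℂ), (1 : ℂ)) wi :=
      (hasDerivAt_const wi z₀).prodMk (hasDerivAt_id wi)
    exact hgd.comp_hasDerivAt wi h1
  have ht : fderiv ℂ g a (0, 1) ≠ 0 := hpart.deriv ▸ hs
  set A : (ℂ × ℂ) →L[ℂ] ℂ × ℂ := (ContinuousLinearMap.fst ℂ ℂ ℂ).prod (fderiv ℂ g a) with hAdef
  have hinj : Function.Injective A := by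
    intro p q hpq
    have h0' : A (p - q) = 0 := by rw [map_sub, hpq, sub_self]
    have h1 : p.1 - q.1 = 0 := congrArg Prod.fst h0'
    have h2 : fderiv ℂ g a (p - q) = 0 := congrArg Prod.snd h0'
    have hd : p - q = (p.2 - q.2) • ((0 : ℂ), (1 : ℂ)) := by
      ext
      · simpa using h1
      · simp
    rw [hd, map_smul, smul_eq_zero] at h2
    have h3 : p.2 - q.2 = 0 := h2.resolve_right ht
    have : p - q = 0 := by rw [hd, h3, zero_smul]
    exact sub_eq_zero.mp this
  have hsurj : Function.Surjective A :=
    (LinearMap.injective_iff_surjective (f := (A : (ℂ × ℂ) →ₗ[ℂ] ℂ × ℂ))).mp hinj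
  set e : (ℂ × ℂ) ≃L[ℂ] ℂ × ℂ :=
    (LinearEquiv.ofBijective (A : (ℂ × ℂ) →ₗ[ℂ] ℂ × ℂ) ⟨hinj, hsurj⟩).toContinuousLinearEquiv
    with hedef
  have he : (e : (ℂ × ℂ) →L[ℂ] ℂ × ℂ) = A := ContinuousLinearMap.ext fun x => rfl
  set Φ : ℂ × ℂ → ℂ × ℂ := fun p => (p.1, g p) with hΦdef
  have hΦ : ContDiffAt ℂ ⊤ Φ a := (contDiff_fst.prodMk hg).contDiffAt
  have hΦd : HasFDerivAt Φ ((e : (ℂ × ℂ) →L[ℂ] ℂ × ℂ)) a := by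
    rw [he]; exact hasFDerivAt_fst.prodMk hgd
  set ψ : ℂ × ℂ → ℂ × ℂ := hΦ.localInverse hΦd (by simp) with hψdef
  have hΦa : Φ a = (z₀, 0) := by
    simp only [hΦdef, hadef, hgdef]
    exact Prod.ext rfl h0
  have hψa : ψ (z₀, 0) = a := by
    rw [← hΦa]; exact hΦ.localInverse_apply_image hΦd (by simp)
  have hψc : ContDiffAt ℂ ⊤ ψ (z₀, 0) := hΦa ▸ hΦ.to_localInverse hΦd (by simp)
  have hri : ∀ᶠ y in 𝓝 ((z₀ : ℂ), (0 : ℂ)), Φ (ψ y) = y :=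
    hΦa ▸ (hΦ.hasStrictFDerivAt' hΦd (by simp)).eventually_right_inverse
  refine ⟨fun z => (ψ (z, 0)).2, by show (ψ (z₀, 0)).2 = wi; rw [hψa], ?_, ?_⟩
  · have hz : Tendsto (fun z : ℂ => ((z : ℂ), (0 : ℂ))) (𝓝 z₀) (𝓝 (z₀, 0)) :=
      ((continuous_id.prodMk continuous_const)).tendsto z₀
    filter_upwards [hz.eventually hri] with z hzz
    have h1 : (ψ (z, 0)).1 = z := congrArg Prod.fst hzz
    have h2 : g (ψ (z, 0)) = 0 := congrArg Prod.snd hzz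
    show eval2 F z ((ψ (z, 0)).2) = 0
    simpa [hgdef, h1] using h2
  · have hφc : ContDiffAt ℂ ⊤ (fun z : ℂ => (ψ (z, 0)).2) z₀ := by
      have hm : ContDiffAt ℂ ⊤ (fun z : ℂ => ψ (z, 0)) z₀ :=
        hψc.comp z₀ ((contDiff_id.prodMk contDiff_const).contDiffAt)
      exact contDiff_snd.contDiffAt.comp z₀ hm
    obtain ⟨u, hu, hcd⟩ := hφc.contDiffOn (m := 1) le_top (by simp)
    exact ⟨u, hu, hcd.differentiableOn one_ne_zero⟩

/-- If `f(z₀,·)` has degree `n` with `n` distinct simple roots `w_1,…,w_n`, then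
near `z₀` the algebraic function decomposes into `n` analytic single-valued
sheets: holomorphic functions `φ_i` with `φ_i(z₀) = w_i`, `f(z,φ_i(z)) = 0`, and
for each `z` near `z₀` the roots of `f(z,·)` are exactly the `φ_i(z)`. -/
theorem local_sheets_at_nonsingular_point
    (F : Polynomial (Polynomial ℂ)) (z₀ : ℂ)
    (han : F.leadingCoeff.eval z₀ ≠ 0)
    (w : Fin F.natDegree → ℂ) (hinj : Function.Injective w)
    (hroot : ∀ i, eval2 F z₀ (w i) = 0)
    (hsimple : ∀ i, deriv (fun v => eval2 F z₀ v) (w i) ≠ 0) :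
    ∃ δ > 0, ∃ φ : Fin F.natDegree → ℂ → ℂ,
      (∀ i, DifferentiableOn ℂ (φ i) (Metric.ball z₀ δ)) ∧
      (∀ i, φ i z₀ = w i) ∧
      (∀ i, ∀ z ∈ Metric.ball z₀ δ, eval2 F z (φ i z) = 0) ∧
      (∀ z ∈ Metric.ball z₀ δ, ∀ y : ℂ,
        eval2 F z y = 0 ↔ ∃ i, y = φ i z) := by
  choose φ hφ0 hφroot u hu hdiff using fun i =>
    exists_sheet F z₀ (w i) (hroot i) (hsimple i)
  -- continuity of each sheet at z₀
  have hcont : ∀ i, ContinuousAt (φ i) z₀ := fun i =>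
    (((hdiff i).differentiableAt (hu i)).continuousAt)
  -- eventual facts
  have hlc : ∀ᶠ z in nhds z₀, F.leadingCoeff.eval z ≠ 0 :=
    (F.leadingCoeff.continuous.continuousAt).eventually_ne han
  have hneq : ∀ i j : Fin F.natDegree, ∀ᶠ z in nhds z₀, i ≠ j → φ i z ≠ φ j z := by
    intro i j
    by_cases hij : i = j
    · exact Filter.Eventually.of_forall fun z h => absurd hij h
    · have h1 : ContinuousAt (fun z => φ i z - φ j z) z₀ := (hcont i).sub (hcont j)
      have h2 : φ i z₀ - φ j z₀ ≠ 0 := sub_ne_zero.mpr (by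
        rw [hφ0 i, hφ0 j]; exact fun h => hij (hinj h))
      filter_upwards [h1.eventually_ne h2] with z hz _
      exact sub_ne_zero.mp hz
  have hall : ∀ᶠ z in nhds z₀,
      (∀ i, eval2 F z (φ i z) = 0) ∧
      (∀ i j, i ≠ j → φ i z ≠ φ j z) ∧ F.leadingCoeff.eval z ≠ 0 :=
    ((Filter.eventually_all.2 hφroot).and
      ((Filter.eventually_all.2 fun i => Filter.eventually_all.2 fun j => hneq i j).and hlc))
  have hU : ((⋂ i, u i) ∩ {z | (∀ i, eval2 F z (φ i z) = 0) ∧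
      (∀ i j, i ≠ j → φ i z ≠ φ j z) ∧ F.leadingCoeff.eval z ≠ 0}) ∈ nhds z₀ :=
    Filter.inter_mem (Filter.iInter_mem.2 hu) hall
  obtain ⟨δ, hδ, hball⟩ := Metric.mem_nhds_iff.mp hU
  refine ⟨δ, hδ, φ, ?_, hφ0, ?_, ?_⟩
  · intro i
    exact (hdiff i).mono fun z hz => Set.mem_iInter.mp (hball hz).1 i
  · intro i z hz
    exact (hball hz).2.1 i
  · intro z hz y
    obtain ⟨hroots, hdist, hlcz⟩ := (hball hz).2
    set p : Polynomial ℂ := F.map (Polynomial.evalRingHom z) with hpdef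
    have hco : p.coeff F.natDegree = F.leadingCoeff.eval z := by
      rw [hpdef, Polynomial.coeff_map, Polynomial.coeff_natDegree]
      rfl
    have hcne : p.coeff F.natDegree ≠ 0 := hco ▸ hlcz
    have hpne : p ≠ 0 := fun h => hcne (by simp [h])
    have hdeg : p.natDegree = F.natDegree :=
      le_antisymm (Polynomial.natDegree_map_le) (Polynomial.le_natDegree_of_ne_zero hcne)
    have hinjz : Function.Injective fun i => φ i z := fun i j h => by
      by_contra hij; exact hdist i j hij h
    set s : Finset ℂ := Finset.image (fun i => φ i z) Finset.univ with hsdef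
    have hcard : s.card = F.natDegree := by
      rw [hsdef, Finset.card_image_of_injective _ hinjz, Finset.card_univ, Fintype.card_fin]
    have hsub : s ⊆ p.roots.toFinset := by
      intro y hy
      obtain ⟨i, _, rfl⟩ := Finset.mem_image.mp hy
      exact Multiset.mem_toFinset.mpr
        ((Polynomial.mem_roots hpne).mpr (hroots i))
    have hseq : s = p.roots.toFinset := by
      refine Finset.eq_of_subset_of_card_le hsub ?_
      rw [hcard]
      exact le_trans (Multiset.toFinset_card_le _) (le_trans (Polynomial.card_roots' p) hdeg.le)
    constructor
    · intro hy
      have : y ∈ p.roots := (Polynomial.mem_roots hpne).mpr hy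
      have : y ∈ s := hseq ▸ Multiset.mem_toFinset.mpr this
      obtain ⟨i, _, hi⟩ := Finset.mem_image.mp this
      exact ⟨i, hi.symm⟩
    · rintro ⟨i, rfl⟩
      exact hroots i
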